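/- Let p be an odd prime, η a multiplicative character of F_p^× extended by η(0)=0, with η² nontrivial. Let S be an invertible symmetric r×r matrix over F_p with r odd, and c ∈ F_p. Then the sum over w ∈ F_p^r of η(w S wᵀ + c) equals p^{(r-1)/2} · J(η, φ) · φ((-1)^{(r+1)/2} det S) · η(c) · φ(c), where φ is the quadratic character of F_p and J(η,φ) = Σ_{u ∈ F_p} η(u) φ(1-u) is the Jacobi sum. In particular the sum vanishes when c = 0. -/

import Mathlib

open Matrix

/-- The quadratic character of `ZMod p` with values in `ℂ`. -/
noncomputable def quadCharC (p : ℕ) [Fact p.Prime] : MulChar (ZMod p) ℂ :=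
  (quadraticChar (ZMod p)).ringHomComp (Int.castRingHom ℂ)

set_option linter.unusedSectionVars false
open Finset

section Aux
variable {F : Type*} [Field F] [Fintype F] [DecidableEq F]

lemma mulChar_ne_zero (χ : MulChar F ℂ) {a : F} (ha : a ≠ 0) : χ a ≠ 0 := by
  have h : χ a * χ a⁻¹ = 1 := by rw [← _root_.map_mul, mul_inv_cancel₀ ha, _root_.map_one]
  exact left_ne_zero_of_mul_eq_one h

lemma addChar_map_sum {A M : Type*} [AddCommMonoid A] [CommMonoid M] (ψ : AddChar A M)
    {ι : Type*} (s : Finset ι) (f : ι → A) : ψ (∑ i ∈ s, f i) = ∏ i ∈ s, ψ (f i) := by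
  classical
  induction s using Finset.induction_on with
  | empty => simp
  | insert _ _ h ih => rw [Finset.sum_insert h, Finset.prod_insert h, AddChar.map_add_eq_mul, ih]

/-- Key: `∑ b, χ b ψ (b y) = χ⁻¹ y · g(χ,ψ)` for nontrivial `χ`. -/
lemma sum_mulChar_mul_addChar (χ : MulChar F ℂ) (hχ : χ ≠ 1) (ψ : AddChar F ℂ) (y : F) :
    ∑ b : F, χ b * ψ (b * y) = χ⁻¹ y * gaussSum χ ψ := by
  rcases eq_or_ne y 0 with rfl | hy
  · simp only [mul_zero, AddChar.map_zero_eq_one, mul_one]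
    rw [MulChar.sum_eq_zero_of_ne_one hχ, MulChar.map_zero, zero_mul]
  · have h := gaussSum_mulShift χ ψ (Units.mk0 y hy)
    have h2 : gaussSum χ (AddChar.mulShift ψ (Units.mk0 y hy)) = ∑ b : F, χ b * ψ (b * y) := by
      simp only [gaussSum, AddChar.mulShift_apply, Units.val_mk0]
      exact Finset.sum_congr rfl fun b _ => by rw [mul_comm y b]
    rw [h2] at h
    rw [MulChar.inv_apply_eq_inv']
    field_simp [mulChar_ne_zero χ hy] at h ⊢
    rw [← h, Units.val_mk0]; ring

lemma gaussSum_mul_gaussSum_inv (χ : MulChar F ℂ) (hχ : χ ≠ 1) {ψ : AddChar F ℂ}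
    (hψ : ψ.IsPrimitive) :
    gaussSum χ ψ * gaussSum χ⁻¹ ψ = χ (-1) * Fintype.card F := by
  have h1 := gaussSum_mul_gaussSum_eq_card hχ hψ
  have h2 := mul_gaussSum_inv_eq_gaussSum χ⁻¹ ψ
  have h3 : χ⁻¹ (-1) = χ (-1) := by rw [MulChar.inv_apply', inv_neg_one]
  rw [h3] at h2
  rw [← h2, ← mul_assoc, mul_comm (gaussSum χ ψ) (χ (-1)), mul_assoc, h1]

end Aux


section QC
variable {p : ℕ} [Fact p.Prime]

lemma zmod_ringChar_ne_two (hp : p ≠ 2) : ringChar (ZMod p) ≠ 2 := by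
  rw [ZMod.ringChar_zmod_n]; exact_mod_cast hp

lemma quadCharC_apply (a : ZMod p) : quadCharC p a = ((quadraticChar (ZMod p) a : ℤ) : ℂ) := rfl

lemma quadCharC_isQuadratic : (quadCharC p).IsQuadratic :=
  (quadraticChar_isQuadratic (ZMod p)).comp _

lemma quadCharC_ne_one (hp : p ≠ 2) : quadCharC p ≠ 1 := by
  obtain ⟨a, ha⟩ := quadraticChar_exists_neg_one (zmod_ringChar_ne_two hp)
  have ha0 : a ≠ 0 := by
    intro h; rw [h, MulChar.map_zero] at ha; exact (by norm_num : (0:ℤ) ≠ -1) ha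
  intro h
  have h1 : quadCharC p a = 1 := by rw [h, MulChar.one_apply (isUnit_iff_ne_zero.mpr ha0)]
  rw [quadCharC_apply, ha] at h1
  norm_num at h1

lemma quadCharC_sq_one {a : ZMod p} (ha : a ≠ 0) : quadCharC p a ^ 2 = 1 := by
  rcases quadCharC_isQuadratic a with h | h | h
  · exact absurd h (mulChar_ne_zero _ ha)
  · rw [h]; norm_num
  · rw [h]; norm_num

/-- One-variable quadratic Gauss sum: `∑ x, ψ (b x²) = φ(b) g(φ,ψ)` for `b ≠ 0`. -/
lemma sum_addChar_mul_sq (hp : p ≠ 2) {ψ : AddChar (ZMod p) ℂ} (hψ : ψ.IsPrimitive)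
    {b : ZMod p} (hb : b ≠ 0) :
    ∑ x : ZMod p, ψ (b * (x * x)) = quadCharC p b * gaussSum (quadCharC p) ψ := by
  classical
  have hsq : ∀ x : ZMod p, ψ (b * (x * x)) = ψ (b * x ^ 2) := fun x => by rw [sq]
  simp_rw [hsq]
  have hstep : ∑ x : ZMod p, ψ (b * x ^ 2) =
      ∑ t : ZMod p, (#{x : ZMod p | x ^ 2 = t}.toFinset : ℂ) * ψ (b * t) := by
    have h := Finset.sum_fiberwise' (univ : Finset (ZMod p)) (fun x => x ^ 2)
      (fun t => ψ (b * t))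
    rw [← h]
    refine Finset.sum_congr rfl fun t _ => ?_
    rw [Finset.sum_const, nsmul_eq_mul]
    congr 2
    rw [Set.toFinset_setOf]
  rw [hstep]
  have hcount : ∀ t : ZMod p, (#{x : ZMod p | x ^ 2 = t}.toFinset : ℂ) =
      quadCharC p t + 1 := by
    intro t
    have h := quadraticChar_card_sqrts (zmod_ringChar_ne_two hp) t
    rw [quadCharC_apply]
    exact_mod_cast congrArg (fun z : ℤ => (z : ℂ)) h
  simp_rw [hcount, add_mul, one_mul, Finset.sum_add_distrib]
  have h2 : ∑ t : ZMod p, ψ (b * t) = 0 := by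
    have h3 : ∀ t : ZMod p, ψ (b * t) = (AddChar.mulShift ψ b) t := fun t => rfl
    simp_rw [h3]
    exact AddChar.sum_eq_zero_of_ne_one (hψ hb)
  have h1 : ∑ t : ZMod p, quadCharC p t * ψ (t * b) =
      (quadCharC p)⁻¹ b * gaussSum (quadCharC p) ψ :=
    sum_mulChar_mul_addChar _ (quadCharC_ne_one hp) ψ b
  rw [(quadCharC_isQuadratic (p := p)).inv] at h1
  calc (∑ t : ZMod p, quadCharC p t * ψ (b * t)) + ∑ t : ZMod p, ψ (b * t)
      = ∑ t : ZMod p, quadCharC p t * ψ (t * b) := by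
        rw [h2, add_zero]; exact Finset.sum_congr rfl fun t _ => by rw [mul_comm b t]
    _ = quadCharC p b * gaussSum (quadCharC p) ψ := h1

end QC

section Diag
variable {p : ℕ} [Fact p.Prime]

/-- Diagonalization of a symmetric matrix over `ZMod p`, `p` odd. -/
lemma exists_diagonal_congruent (hp : p ≠ 2) {r : ℕ}
    (S : Matrix (Fin r) (Fin r) (ZMod p)) (hS : Sᵀ = S) :
    ∃ (M : Matrix (Fin r) (Fin r) (ZMod p)) (a : Fin r → ZMod p),
      IsUnit M.det ∧ M * S * Mᵀ = Matrix.diagonal a := by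
  classical
  have h2 : (2 : ZMod p) ≠ 0 := by
    exact Ring.two_ne_zero (by rw [ZMod.ringChar_zmod_n]; exact_mod_cast hp)
  haveI : Invertible (2 : ZMod p) := invertibleOfNonzero h2
  set B : LinearMap.BilinForm (ZMod p) (Fin r → ZMod p) :=
    Matrix.toLinearMap₂' (ZMod p) S with hB
  have hBapp : ∀ x y, B x y = x ⬝ᵥ S *ᵥ y := fun x y => Matrix.toLinearMap₂'_apply' S x y
  have hsymm : B.IsSymm := by
    rw [LinearMap.BilinForm.isSymm_def]
    intro x y
    simp only [RingHom.id_apply, hBapp]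
    conv_lhs => rw [← hS]
    rw [Matrix.dotProduct_mulVec, Matrix.vecMul_transpose, dotProduct_comm]
  obtain ⟨v, hv⟩ := LinearMap.BilinForm.exists_orthogonal_basis (LinearMap.BilinForm.isSymm_iff.1 hsymm)
  have hrk : Module.finrank (ZMod p) (Fin r → ZMod p) = r := Module.finrank_fin_fun (ZMod p)
  let v' : Module.Basis (Fin r) (ZMod p) (Fin r → ZMod p) := v.reindex (finCongr hrk)
  have hv' : ∀ i j : Fin r, i ≠ j → B (v' i) (v' j) = 0 := by
    intro i j hij
    rw [show v' i = v ((finCongr hrk).symm i) from v.reindex_apply _ _,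
        show v' j = v ((finCongr hrk).symm j) from v.reindex_apply _ _]
    exact hv (fun h => hij (by simpa using congrArg (finCongr hrk) h))
  refine ⟨Matrix.of (fun i j => v' i j), fun i => B (v' i) (v' i), ?_, ?_⟩
  · have hMt : (Matrix.of (fun i j => v' i j))ᵀ = (Pi.basisFun (ZMod p) (Fin r)).toMatrix v' := by
      ext i j
      simp [Module.Basis.toMatrix_apply, Pi.basisFun_repr]
    haveI := Module.Basis.invertibleToMatrix (Pi.basisFun (ZMod p) (Fin r)) v'
    have : IsUnit ((Matrix.of (fun i j => v' i j))ᵀ).det := by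
      rw [hMt]
      exact (Matrix.isUnit_iff_isUnit_det _).mp (isUnit_of_invertible _)
    rwa [Matrix.det_transpose] at this
  · ext i j
    have hentry : (Matrix.of (fun i j => v' i j) * S * (Matrix.of (fun i j => v' i j))ᵀ) i j
        = B (v' i) (v' j) := by
      rw [hBapp]
      simp only [Matrix.mul_apply, Matrix.transpose_apply, Matrix.of_apply,
        dotProduct, Matrix.mulVec, Finset.sum_mul, Finset.mul_sum]
      rw [Finset.sum_comm]
      refine Finset.sum_congr rfl fun k _ => Finset.sum_congr rfl fun l _ => by ring
    rw [hentry]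
    by_cases hij : i = j
    · subst hij; simp [Matrix.diagonal_apply_eq]
    · rw [Matrix.diagonal_apply_ne _ hij]
      exact hv' i j hij
end Diag
section DiagSum
variable {p : ℕ} [Fact p.Prime]

lemma diag_sum_eval (hp : p ≠ 2) (η : MulChar (ZMod p) ℂ) (hη : η ^ 2 ≠ 1)
    {r m : ℕ} (hrm : r = 2 * m + 1) (a : Fin r → ZMod p) (ha : ∀ i, a i ≠ 0) (c : ZMod p) :
    ∑ u : Fin r → ZMod p, η ((∑ i, a i * (u i * u i)) + c) =
      (p : ℂ) ^ m * jacobiSum η (quadCharC p) * quadCharC p (-1) ^ (m + 1) *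
        quadCharC p (∏ i, a i) * η c * quadCharC p c := by
  classical
  have hp0 : p ≠ 0 := (Fact.out : p.Prime).pos.ne'
  have hζ : IsPrimitiveRoot (Complex.exp (2 * ↑Real.pi * Complex.I / p)) p :=
    Complex.isPrimitiveRoot_exp p hp0
  haveI : NeZero p := ⟨hp0⟩
  set ψ : AddChar (ZMod p) ℂ := AddChar.zmodChar p hζ.pow_eq_one with hψdef
  have hψ : ψ.IsPrimitive := AddChar.zmodChar_primitive_of_primitive_root p hζ
  have hφ1 : quadCharC p ≠ 1 := quadCharC_ne_one hp
  have hφq : (quadCharC p).IsQuadratic := quadCharC_isQuadratic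
  have hη1 : η ≠ 1 := fun h => hη (by rw [h, one_pow])
  have hηi1 : η⁻¹ ≠ 1 := fun h => hη1 (by rwa [inv_eq_one] at h)
  have hηφ : η * quadCharC p ≠ 1 := by
    intro h
    apply hη
    have h2 : η = (quadCharC p)⁻¹ := mul_eq_one_iff_eq_inv.mp h
    rw [h2, hφq.inv, hφq.sq_eq_one]
  have hηiφ : η⁻¹ * quadCharC p ≠ 1 := by
    intro h
    apply hη
    rw [inv_mul_eq_one] at h
    rw [h, hφq.sq_eq_one]
  have hcard : ((Fintype.card (ZMod p) : ℂ)) = (p : ℂ) := by rw [ZMod.card]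
  have hcard0 : ((Fintype.card (ZMod p) : ℂ)) ≠ 0 := by
    rw [hcard]; exact_mod_cast hp0
  have hG0 : gaussSum η⁻¹ ψ ≠ 0 := gaussSum_ne_zero_of_nontrivial hcard0 hηi1 hψ
  set Gr : ℂ := gaussSum (quadCharC p) ψ with hGrdef
  set A : ZMod p := ∏ i, a i with hAdef
  -- inner sum computation
  have inner : ∀ b : ZMod p,
      ∑ u : Fin r → ZMod p, η⁻¹ b * ψ (b * ((∑ i, a i * (u i * u i)) + c)) =
      (η⁻¹ * quadCharC p) b * ψ (b * c) * (quadCharC p A * Gr ^ r) := by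
    intro b
    rcases eq_or_ne b 0 with rfl | hb
    · simp [MulChar.map_zero]
    · have expand : ∀ u : Fin r → ZMod p,
          η⁻¹ b * ψ (b * ((∑ i, a i * (u i * u i)) + c)) =
          η⁻¹ b * ψ (b * c) * ∏ i, ψ ((b * a i) * (u i * u i)) := by
        intro u
        have e1 : b * ((∑ i, a i * (u i * u i)) + c) =
            (∑ i, (b * a i) * (u i * u i)) + b * c := by
          rw [mul_add, Finset.mul_sum]
          congr 1
          exact Finset.sum_congr rfl fun i _ => by ring
        rw [e1, AddChar.map_add_eq_mul, addChar_map_sum]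
        ring
      have hφprod : ∏ i, quadCharC p (b * a i) = quadCharC p b * quadCharC p A := by
        rw [← _root_.map_prod, Finset.prod_mul_distrib, Finset.prod_const, Finset.card_univ,
          Fintype.card_fin, _root_.map_mul, _root_.map_pow]
        congr 1
        rw [hrm, pow_succ, pow_mul, quadCharC_sq_one hb, one_pow, one_mul]
      calc ∑ u : Fin r → ZMod p, η⁻¹ b * ψ (b * ((∑ i, a i * (u i * u i)) + c))
          = ∑ u : Fin r → ZMod p, η⁻¹ b * ψ (b * c) * ∏ i, ψ ((b * a i) * (u i * u i)) :=
            Finset.sum_congr rfl fun u _ => expand u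
        _ = η⁻¹ b * ψ (b * c) * ∑ u : Fin r → ZMod p, ∏ i, ψ ((b * a i) * (u i * u i)) := by
            rw [← Finset.mul_sum]
        _ = η⁻¹ b * ψ (b * c) * ∏ i, ∑ x : ZMod p, ψ ((b * a i) * (x * x)) := by
            congr 1
            exact (Fintype.prod_sum fun i x => ψ ((b * a i) * (x * x))).symm
        _ = η⁻¹ b * ψ (b * c) * ∏ i, (quadCharC p (b * a i) * Gr) :=
            congrArg _ (Finset.prod_congr rfl fun i _ =>
              sum_addChar_mul_sq hp hψ (mul_ne_zero hb (ha i)))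
        _ = η⁻¹ b * ψ (b * c) * ((∏ i, quadCharC p (b * a i)) * Gr ^ r) := by
            rw [Finset.prod_mul_distrib, Finset.prod_const, Finset.card_univ, Fintype.card_fin]
        _ = (η⁻¹ * quadCharC p) b * ψ (b * c) * (quadCharC p A * Gr ^ r) := by
            rw [hφprod, MulChar.mul_apply]; try ring
  -- Gauss sum identities
  have hGr2 : Gr ^ 2 = quadCharC p (-1) * p := by
    rw [hGrdef, gaussSum_sq hφ1 hφq hψ, hcard]
  have h1 : gaussSum (η * quadCharC p) ψ * jacobiSum η (quadCharC p) =
      gaussSum η ψ * Gr := jacobiSum_mul_nontrivial hηφ ψ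
  have h2 : gaussSum η ψ * gaussSum η⁻¹ ψ = η (-1) * p := by
    rw [gaussSum_mul_gaussSum_inv η hη1 hψ, hcard]
  have h3 : gaussSum (η * quadCharC p) ψ * gaussSum (η⁻¹ * quadCharC p) ψ =
      η (-1) * quadCharC p (-1) * p := by
    have h := gaussSum_mul_gaussSum_inv (η * quadCharC p) hηφ hψ
    rw [mul_inv, hφq.inv, MulChar.mul_apply, hcard] at h
    exact h
  have hgη0 : gaussSum η ψ ≠ 0 := gaussSum_ne_zero_of_nontrivial hcard0 hη1 hψ
  have hgηφ0 : gaussSum (η * quadCharC p) ψ ≠ 0 :=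
    gaussSum_ne_zero_of_nontrivial hcard0 hηφ hψ
  have core : gaussSum η⁻¹ ψ * jacobiSum η (quadCharC p) * quadCharC p (-1) =
      gaussSum (η⁻¹ * quadCharC p) ψ * Gr := by
    apply mul_left_cancel₀ (mul_ne_zero hgη0 hgηφ0)
    linear_combination (quadCharC p (-1) * gaussSum (η * quadCharC p) ψ *
        jacobiSum η (quadCharC p)) * h2 + (quadCharC p (-1) * η (-1) * (p:ℂ)) * h1 -
      (gaussSum η ψ * Gr) * h3
  have key2 : gaussSum η⁻¹ ψ * ((p:ℂ)^m * jacobiSum η (quadCharC p) *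
      quadCharC p (-1) ^ (m+1)) = gaussSum (η⁻¹ * quadCharC p) ψ * Gr ^ r := by
    have hGrr : Gr ^ r = (quadCharC p (-1) * p) ^ m * Gr := by
      rw [hrm, pow_succ, pow_mul, hGr2]
    rw [hGrr, mul_pow, pow_succ (quadCharC p (-1)) m]
    linear_combination (quadCharC p (-1) ^ m * (p:ℂ) ^ m) * core
  -- main chain
  apply mul_left_cancel₀ hG0
  calc gaussSum η⁻¹ ψ * ∑ u : Fin r → ZMod p, η ((∑ i, a i * (u i * u i)) + c)
      = ∑ u : Fin r → ZMod p, ∑ b : ZMod p,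
          η⁻¹ b * ψ (b * ((∑ i, a i * (u i * u i)) + c)) := by
        rw [Finset.mul_sum]
        refine Finset.sum_congr rfl fun u _ => ?_
        have hb := sum_mulChar_mul_addChar η⁻¹ hηi1 ψ ((∑ i, a i * (u i * u i)) + c)
        rw [inv_inv] at hb
        rw [mul_comm]; exact hb.symm
    _ = ∑ b : ZMod p, ∑ u : Fin r → ZMod p,
          η⁻¹ b * ψ (b * ((∑ i, a i * (u i * u i)) + c)) := Finset.sum_comm
    _ = ∑ b : ZMod p, (η⁻¹ * quadCharC p) b * ψ (b * c) * (quadCharC p A * Gr ^ r) :=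
        Finset.sum_congr rfl fun b _ => inner b
    _ = (∑ b : ZMod p, (η⁻¹ * quadCharC p) b * ψ (b * c)) * (quadCharC p A * Gr ^ r) := by
        rw [← Finset.sum_mul]
    _ = ((η⁻¹ * quadCharC p)⁻¹ c * gaussSum (η⁻¹ * quadCharC p) ψ) *
          (quadCharC p A * Gr ^ r) := by
        rw [sum_mulChar_mul_addChar _ hηiφ ψ c]
    _ = η c * quadCharC p c * gaussSum (η⁻¹ * quadCharC p) ψ * (quadCharC p A * Gr ^ r) := by
        rw [mul_inv, inv_inv, hφq.inv, MulChar.mul_apply]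
    _ = gaussSum η⁻¹ ψ * ((p : ℂ) ^ m * jacobiSum η (quadCharC p) *
          quadCharC p (-1) ^ (m + 1) * quadCharC p A * η c * quadCharC p c) := by
        linear_combination (quadCharC p A * η c * quadCharC p c) * key2.symm

end DiagSum

/-- Lemma 5.3, odd-rank case: for `p` an odd prime, `η` a multiplicative character of `F_p`
with `η² ≠ 1`, `S` an invertible symmetric `r × r` matrix with `r` odd, and `c ∈ F_p`,
`∑_{w ∈ F_p^r} η(w S wᵀ + c) = p^((r-1)/2) J(η,φ) φ((-1)^((r+1)/2) det S) η(c) φ(c)`. -/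
theorem charSum_quadForm_odd_rank (p r : ℕ) [Fact p.Prime] (hp : p ≠ 2)
    (η : MulChar (ZMod p) ℂ) (hη : η ^ 2 ≠ 1) (hr : Odd r)
    (S : Matrix (Fin r) (Fin r) (ZMod p)) (hS : Sᵀ = S) (hSdet : IsUnit S.det)
    (c : ZMod p) :
    (∑ w : Fin r → ZMod p, η (dotProduct w (S.mulVec w) + c)) =
      (p : ℂ) ^ ((r - 1) / 2) * jacobiSum η (quadCharC p) *
        quadCharC p ((-1 : ZMod p) ^ ((r + 1) / 2) * S.det) * η c * quadCharC p c := by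
  classical
  obtain ⟨m, hm⟩ := hr
  have hrm : r = 2 * m + 1 := by omega
  have hhalf1 : (r - 1) / 2 = m := by omega
  have hhalf2 : (r + 1) / 2 = m + 1 := by omega
  obtain ⟨M, a, hM, hdiag⟩ := exists_diagonal_congruent hp S hS
  have hM0 : M.det ≠ 0 := hM.ne_zero
  have hdet : S.det * M.det ^ 2 = ∏ i, a i := by
    have h := congrArg Matrix.det hdiag
    rw [Matrix.det_mul, Matrix.det_mul, Matrix.det_transpose, Matrix.det_diagonal] at h
    rw [← h]; ring
  have ha : ∀ i, a i ≠ 0 := by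
    intro i hai
    have h0 : (∏ j, a j) = 0 := Finset.prod_eq_zero (Finset.mem_univ i) hai
    rw [← hdet] at h0
    exact (mul_ne_zero hSdet.ne_zero (pow_ne_zero 2 hM0)) h0
  haveI : Invertible M := M.invertibleOfIsUnitDet hM
  have hsub : ∀ u : Fin r → ZMod p,
      dotProduct (Matrix.vecMul u M) (S.mulVec (Matrix.vecMul u M)) =
      ∑ i, a i * (u i * u i) := by
    intro u
    calc (u ᵥ* M) ⬝ᵥ S *ᵥ (u ᵥ* M)
        = (u ᵥ* M ᵥ* S) ⬝ᵥ (u ᵥ* M) := by rw [Matrix.dotProduct_mulVec]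
      _ = (u ᵥ* (M * S)) ⬝ᵥ (Mᵀ *ᵥ u) := by rw [Matrix.vecMul_vecMul, Matrix.mulVec_transpose]
      _ = (u ᵥ* (M * S) ᵥ* Mᵀ) ⬝ᵥ u := by rw [Matrix.dotProduct_mulVec]
      _ = (u ᵥ* Matrix.diagonal a) ⬝ᵥ u := by rw [Matrix.vecMul_vecMul, hdiag]
      _ = ∑ i, a i * (u i * u i) := by
          simp only [dotProduct, Matrix.vecMul_diagonal]
          exact Finset.sum_congr rfl fun i _ => by ring
  let e : (Fin r → ZMod p) ≃ (Fin r → ZMod p) :=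
    { toFun := fun u => Matrix.vecMul u M
      invFun := fun w => Matrix.vecMul w M⁻¹
      left_inv := fun u => by
        show (Matrix.vecMul u M) ᵥ* M⁻¹ = u
        rw [Matrix.vecMul_vecMul, Matrix.mul_nonsing_inv _ hM, Matrix.vecMul_one]
      right_inv := fun w => by
        show (Matrix.vecMul w M⁻¹) ᵥ* M = w
        rw [Matrix.vecMul_vecMul, Matrix.nonsing_inv_mul _ hM, Matrix.vecMul_one] }
  have hbij : ∑ w : Fin r → ZMod p, η (dotProduct w (S.mulVec w) + c) =
      ∑ u : Fin r → ZMod p, η ((∑ i, a i * (u i * u i)) + c) := by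
    rw [← Equiv.sum_comp e (fun w => η (dotProduct w (S.mulVec w) + c))]
    refine Finset.sum_congr rfl fun u _ => ?_
    have : e u = Matrix.vecMul u M := rfl
    rw [this, hsub u]
  rw [hbij, diag_sum_eval hp η hη hrm a ha c, hhalf1, hhalf2]
  have e1 : quadCharC p (∏ i, a i) = quadCharC p S.det := by
    rw [← hdet, _root_.map_mul, _root_.map_pow, quadCharC_sq_one hM0, mul_one]
  have e2 : quadCharC p ((-1 : ZMod p) ^ (m + 1) * S.det) =
      quadCharC p (-1) ^ (m + 1) * quadCharC p S.det := by
    rw [_root_.map_mul, _root_.map_pow]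
  rw [e1, e2]; ring
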